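/- Let P be a perfect-tree forcing notion. (a) There exists a sequence ⟨φ_n⟩_{n<ω} of finite splitting systems over P in which each φ_{n+1} properly extends φ_n. (b) For any such sequence, the limit system φ = ⋃_n φ_n is a family ⟨T_s⟩_{s∈2^<ω} of trees in P satisfying T_{s⌢i} ⊆ (T_s)→i for all s ∈ 2^<ω and i ∈ {0,1}; the set T = ⋂_n ⋃_{s∈2^n} T_s is a perfect tree; [T] = ⋂_n ⋃_{s∈2^n}[T_s]; and for every u ∈ 2^<ω, T→u = T ∩ T_u = ⋂_{n≥|u|} ⋃_{s∈2^n, u⊆s} T_s. -/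
import Mathlib


noncomputable section

/-- Finite binary strings. -/
abbrev Str : Type := List Bool

/-- Points of Cantor space `2^ω`. -/
abbrev Pt : Type := ℕ → Bool

/-- The length-`n` initial segment of a point of Cantor space, as a string. -/
def seg (a : Pt) (n : ℕ) : Str := (List.range n).map a

/-- A tree: a set of strings closed under initial segments. -/
def IsTree (T : Set Str) : Prop := ∀ ⦃s t : Str⦄, s <+: t → t ∈ T → s ∈ T

/-- A perfect tree: a nonempty tree in which every string has two
incomparable extensions inside the tree. -/
def IsPerfectTree (T : Set Str) : Prop :=
  T.Nonempty ∧ IsTree T ∧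
    ∀ s ∈ T, ∃ t₁ t₂, t₁ ∈ T ∧ t₂ ∈ T ∧ s <+: t₁ ∧ s <+: t₂ ∧ ¬ t₁ <+: t₂ ∧ ¬ t₂ <+: t₁

/-- The restriction `T↾s = {t ∈ T : s ⊆ t or t ⊆ s}`. -/
def Tres (T : Set Str) (s : Str) : Set Str := {t ∈ T | s <+: t ∨ t <+: s}

/-- The set `[T]` of branches of a tree `T`. -/
def branches (T : Set Str) : Set Pt := {a | ∀ n, seg a n ∈ T}

/-- `s` is the stem (root) of `T`: the longest `s ∈ T` with `T = T↾s`. -/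
def IsStem (T : Set Str) (s : Str) : Prop :=
  s ∈ T ∧ T = Tres T s ∧ ∀ t ∈ T, T = Tres T t → t <+: s

open Classical in
/-- The stem `root(T)` of a tree (junk value `[]` if there is none). -/
def stem (T : Set Str) : Str := if h : ∃ s, IsStem T s then h.choose else []

/-- Simple splitting `T→i = T↾(root(T)⌢i)`. -/
def splitOne (T : Set Str) (i : Bool) : Set Str := Tres T (stem T ++ [i])

/-- Iterated splitting `T→u`. -/
def splitIter (T : Set Str) (u : Str) : Set Str := u.foldl splitOne T

/-- Almost disjointness of trees: finite intersection. -/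
def AD (S T : Set Str) : Prop := (S ∩ T).Finite

/-- A perfect-tree forcing notion: a nonempty set of perfect trees closed
under restrictions. -/
def IsPTF (P : Set (Set Str)) : Prop :=
  P.Nonempty ∧ (∀ T ∈ P, IsPerfectTree T) ∧ ∀ T ∈ P, ∀ s ∈ T, Tres T s ∈ P

/-- `A` is relatively clopen in `B` (as a subspace of Cantor space). -/
def ClopenIn (A B : Set Pt) : Prop := IsClopen ((fun x : B => (x : Pt)) ⁻¹' A)

/-- `A` is relatively open in `B` (as a subspace of Cantor space). -/
def OpenIn (A B : Set Pt) : Prop := IsOpen ((fun x : B => (x : Pt)) ⁻¹' A)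

/-- A special perfect-tree forcing notion: `P = {T↾s : s ∈ T ∈ A}` for an
antichain (pairwise a.d. set) `A ⊆ P`. -/
def SpecialPTF (P : Set (Set Str)) : Prop :=
  ∃ A ⊆ P, A.Pairwise AD ∧ P = {R | ∃ T ∈ A, ∃ s ∈ T, R = Tres T s}

/-- A regular perfect-tree forcing notion: `[S] ∩ [T]` is relatively clopen
in `[S]` or in `[T]`, for all `S, T ∈ P`. -/
def RegularPTF (P : Set (Set Str)) : Prop :=
  ∀ S ∈ P, ∀ T ∈ P,
    ClopenIn (branches S ∩ branches T) (branches S) ∨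
    ClopenIn (branches S ∩ branches T) (branches T)

/-- `T ⊆ᶠ ⋃ D`: `[T]` is covered by finitely many `[S]`, `S ∈ D`. -/
def SqFin (T : Set Str) (D : Set (Set Str)) : Prop :=
  ∃ D' ⊆ D, D'.Finite ∧ branches T ⊆ ⋃ S ∈ D', branches S

/-- `P ⊑ Q`: `Q` is a refinement of `P`. -/
def Refines (P Q : Set (Set Str)) : Prop :=
  (∀ T ∈ P, ∃ S ∈ Q, S ⊆ T) ∧
  (∀ S ∈ Q, SqFin S P) ∧
  (∀ S ∈ Q, ∀ T ∈ P, ClopenIn (branches S ∩ branches T) (branches S) ∧ ¬ T ⊆ S)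

/-- `D` is dense in `P`. -/
def DenseIn (D P : Set (Set Str)) : Prop := ∀ T ∈ P, ∃ S ∈ D, S ⊆ T

/-- `D` is pre-dense in `P`. -/
def PreDenseIn (D P : Set (Set Str)) : Prop :=
  DenseIn {T ∈ P | ∃ S ∈ D, T ⊆ S} P

/-- `P ⊑_D Q`: `Q` locks `D` over `P`. -/
def Locks (P D Q : Set (Set Str)) : Prop :=
  Refines P Q ∧ ∀ S ∈ Q, SqFin S D

/-- A finite splitting system of height `n` over `P`. -/
def IsFSS (P : Set (Set Str)) (n : ℕ) (φ : Str → Set Str) : Prop :=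
  (∀ s : Str, s.length ≤ n → φ s ∈ P) ∧
  ∀ (s : Str) (i : Bool), s.length < n → φ (s ++ [i]) ⊆ splitOne (φ s) i
/-! ### Auxiliary lemmas -/

section PTAux

open List

lemma pt_pfx_antisymm {s t : Str} (h1 : s <+: t) (h2 : t <+: s) : s = t :=
  h1.eq_of_length (le_antisymm h1.length_le h2.length_le)

lemma pt_comp_of_prefix_prefix {x y z : Str} (hx : x <+: z) (hy : y <+: z) :
    x <+: y ∨ y <+: x := by
  rcases le_total x.length y.length with h | h
  · exact Or.inl (List.prefix_of_prefix_length_le hx hy h)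
  · exact Or.inr (List.prefix_of_prefix_length_le hy hx h)

lemma pt_bits_eq {x y z : Str} {i j : Bool} (hx : x ++ [i] <+: z) (hy : y ++ [j] <+: z)
    (hl : x.length = y.length) : x = y ∧ i = j := by
  have h : x ++ [i] = y ++ [j] := by
    rcases pt_comp_of_prefix_prefix hx hy with h | h
    · exact h.eq_of_length (by simp [hl])
    · exact (h.eq_of_length (by simp [hl])).symm
  have h2 := List.append_inj h hl
  exact ⟨h2.1, by simpa using h2.2⟩

lemma pt_bit_ne {x z : Str} {i j : Bool} (hij : i ≠ j) (hx : x ++ [i] <+: z)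
    (hy : x ++ [j] <+: z) : False :=
  hij (pt_bits_eq hx hy rfl).2

lemma pt_exists_bit {s t : Str} (h : s <+: t) (hne : s.length < t.length) :
    ∃ b, s ++ [b] <+: t := by
  obtain ⟨r, rfl⟩ := h
  cases r with
  | nil => simp at hne
  | cons b r => exact ⟨b, r, by simp⟩

lemma pt_meet : ∀ (x y : Str), ¬ x <+: y → ¬ y <+: x →
    ∃ (r : Str) (i j : Bool), i ≠ j ∧ r ++ [i] <+: x ∧ r ++ [j] <+: y := by
  intro x
  induction x with
  | nil => intro y h _; exact absurd List.nil_prefix h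
  | cons a x ih =>
    intro y hxy hyx
    cases y with
    | nil => exact absurd List.nil_prefix hyx
    | cons c y =>
      by_cases hac : a = c
      · subst hac
        have hxy' : ¬ x <+: y := fun h => hxy (List.cons_prefix_cons.mpr ⟨rfl, h⟩)
        have hyx' : ¬ y <+: x := fun h => hyx (List.cons_prefix_cons.mpr ⟨rfl, h⟩)
        obtain ⟨r, i, j, hij, hi, hj⟩ := ih y hxy' hyx'
        exact ⟨a :: r, i, j, hij, List.cons_prefix_cons.mpr ⟨rfl, hi⟩,
          List.cons_prefix_cons.mpr ⟨rfl, hj⟩⟩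
      · exact ⟨[], a, c, hac, ⟨x, rfl⟩, ⟨y, rfl⟩⟩

lemma pt_seg_length (a : Pt) (n : ℕ) : (seg a n).length = n := by simp [seg]

lemma pt_seg_prefix (a : Pt) {n m : ℕ} (h : n ≤ m) : seg a n <+: seg a m := by
  have : List.range n <+: List.range m := by
    rw [← Nat.min_eq_left h, ← List.take_range]
    exact List.take_prefix _ _
  exact this.map a

lemma pt_seg_succ (a : Pt) (n : ℕ) : seg a (n + 1) = seg a n ++ [a n] := by
  simp [seg, List.range_succ]

lemma pt_nil_mem {T : Set Str} (hT : IsPerfectTree T) : ([] : Str) ∈ T := by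
  obtain ⟨t, ht⟩ := hT.1
  exact hT.2.1 List.nil_prefix ht

lemma pt_exists_long {T : Set Str} (hT : IsPerfectTree T) (n : ℕ) :
    ∃ t ∈ T, n ≤ t.length := by
  induction n with
  | zero => exact ⟨[], pt_nil_mem hT, by simp⟩
  | succ n ih =>
    obtain ⟨t, ht, hn⟩ := ih
    obtain ⟨t₁, t₂, h1, _, p1, p2, i12, _⟩ := hT.2.2 t ht
    rcases Nat.lt_or_ge t.length t₁.length with h | h
    · exact ⟨t₁, h1, by omega⟩
    · have he : t = t₁ := p1.eq_of_length (le_antisymm p1.length_le h)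
      exact absurd (he ▸ p2 : t₁ <+: t₂) i12

lemma pt_tres_eq_self {T : Set Str} {s : Str} (h : ∀ t ∈ T, s <+: t ∨ t <+: s) :
    T = Tres T s := by
  ext t; exact ⟨fun ht => ⟨ht, h t ht⟩, fun ht => ht.1⟩

lemma pt_exists_stem {T : Set Str} (hT : IsPerfectTree T) : ∃ s, IsStem T s := by
  classical
  obtain ⟨t₁, t₂, h1, h2, _, _, i12, i21⟩ := hT.2.2 [] (pt_nil_mem hT)
  set N := max t₁.length t₂.length with hN
  have bound : ∀ s, s ∈ T → T = Tres T s → s.length ≤ N := by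
    intro s hs hres
    have c1 : s <+: t₁ ∨ t₁ <+: s := (hres ▸ h1).2
    have c2 : s <+: t₂ ∨ t₂ <+: s := (hres ▸ h2).2
    rcases c1 with c1 | c1
    · exact le_trans c1.length_le (le_max_left _ _)
    rcases c2 with c2 | c2
    · exact le_trans c2.length_le (le_max_right _ _)
    · rcases pt_comp_of_prefix_prefix c1 c2 with h | h
      · exact absurd h i12
      · exact absurd h i21
  set Q : ℕ → Prop := fun n => ∃ s, (s ∈ T ∧ T = Tres T s) ∧ s.length = n with hQ
  have hq0 : Q 0 :=
    ⟨[], ⟨pt_nil_mem hT, pt_tres_eq_self (fun t _ => Or.inl List.nil_prefix)⟩, rfl⟩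
  obtain ⟨s, ⟨hsT, hsres⟩, hslen⟩ := Nat.findGreatest_spec (m := 0) (Nat.zero_le N) hq0
  refine ⟨s, hsT, hsres, ?_⟩
  intro t ht htres
  have hb := bound t ht htres
  have hle : t.length ≤ Nat.findGreatest Q N := Nat.le_findGreatest hb ⟨t, ⟨ht, htres⟩, rfl⟩
  rw [← hslen] at hle
  have c : t <+: s ∨ s <+: t := (htres ▸ hsT).2
  rcases c with c | c
  · exact c
  · have : s = t := c.eq_of_length (le_antisymm c.length_le hle)
    rw [this]

lemma pt_isStem_stem {T : Set Str} (hT : IsPerfectTree T) : IsStem T (stem T) := by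
  have h := pt_exists_stem hT
  rw [stem, dif_pos h]
  exact h.choose_spec

lemma pt_stem_unique {T : Set Str} {s₁ s₂ : Str} (h1 : IsStem T s₁) (h2 : IsStem T s₂) :
    s₁ = s₂ :=
  pt_pfx_antisymm (h2.2.2 s₁ h1.1 h1.2.1) (h1.2.2 s₂ h2.1 h2.2.1)

lemma pt_stem_eq {T : Set Str} {s : Str} (h : IsStem T s) : stem T = s := by
  have hex : ∃ s, IsStem T s := ⟨s, h⟩
  rw [stem, dif_pos hex]
  exact pt_stem_unique hex.choose_spec h

lemma pt_mem_comp_stem {T : Set Str} (hT : IsPerfectTree T) {t : Str} (ht : t ∈ T) :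
    t <+: stem T ∨ stem T <+: t := by
  have h := (pt_isStem_stem hT).2.1
  exact ((h ▸ ht).2).symm

lemma pt_stem_child_mem {T : Set Str} (hT : IsPerfectTree T) (i : Bool) :
    stem T ++ [i] ∈ T := by
  by_contra hc
  obtain ⟨t, ht, hlen⟩ := pt_exists_long hT ((stem T).length + 1)
  have hst : stem T <+: t := by
    rcases pt_mem_comp_stem hT ht with h | h
    · exact absurd hlen (by have := h.length_le; omega)
    · exact h
  obtain ⟨b, hb⟩ := pt_exists_bit hst (by omega)
  have hbT : stem T ++ [b] ∈ T := hT.2.1 hb ht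
  have hbi : b ≠ i := fun he => hc (he ▸ hbT)
  have hres : T = Tres T (stem T ++ [b]) := by
    apply pt_tres_eq_self
    intro r hr
    rcases pt_mem_comp_stem hT hr with h | h
    · exact Or.inr (h.trans (List.prefix_append _ _))
    · rcases Nat.lt_or_ge (stem T).length r.length with hl | hl
      · obtain ⟨c, hcb⟩ := pt_exists_bit h hl
        have hcT : stem T ++ [c] ∈ T := hT.2.1 hcb hr
        have hci : c ≠ i := fun he => hc (he ▸ hcT)
        have hcbeq : c = b := by cases b <;> cases c <;> cases i <;> simp_all
        exact Or.inl (hcbeq ▸ hcb)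
      · have : stem T = r := h.eq_of_length (le_antisymm h.length_le hl)
        exact Or.inr (this ▸ List.prefix_append _ _)
  have hmax := (pt_isStem_stem hT).2.2 _ hbT hres
  have := hmax.length_le
  simp at this

lemma pt_splitOne_mem {P : Set (Set Str)} (hP : IsPTF P) {T : Set Str} (hT : T ∈ P)
    (i : Bool) : splitOne T i ∈ P :=
  hP.2.2 T hT _ (pt_stem_child_mem (hP.2.1 T hT) i)

lemma pt_splitIter_concat (T : Set Str) (u : Str) (i : Bool) :
    splitIter T (u ++ [i]) = splitOne (splitIter T u) i :=
  List.foldl_concat _ _ _ _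

lemma pt_splitIter_mem {P : Set (Set Str)} (hP : IsPTF P) {T : Set Str} (hT : T ∈ P)
    (u : Str) : splitIter T u ∈ P := by
  induction u using List.reverseRecOn with
  | nil => exact hT
  | append_singleton u i ih => rw [pt_splitIter_concat]; exact pt_splitOne_mem hP ih i

end PTAux
/-! ### Fusion -/

/-- The fusion tree of a splitting system. -/
def TTp (ψ : Str → Set Str) : Set Str := ⋂ n : ℕ, ⋃ (s : Str) (_ : s.length = n), ψ s

/-- The full subtrees of the fusion tree. -/
def Tup (ψ : Str → Set Str) (u : Str) : Set Str :=
  {t | ∃ s, u <+: s ∧ t <+: stem (ψ s)}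

lemma pt_mem_TTp {ψ : Str → Set Str} {t : Str} :
    t ∈ TTp ψ ↔ ∀ n, ∃ s, s.length = n ∧ t ∈ ψ s := by
  simp [TTp, Set.mem_iInter, Set.mem_iUnion]

lemma pt_TTp_subset_nil {ψ : Str → Set Str} : TTp ψ ⊆ ψ [] := by
  intro t ht
  obtain ⟨s, hs, hmem⟩ := pt_mem_TTp.mp ht 0
  rwa [List.length_eq_zero_iff.mp hs] at hmem

/-- The hypotheses on a limit splitting system. -/
structure FGood (P : Set (Set Str)) (ψ : Str → Set Str) : Prop where
  ptf : IsPTF P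
  mem : ∀ s, ψ s ∈ P
  split : ∀ s i, ψ (s ++ [i]) ⊆ splitOne (ψ s) i

namespace FGood

variable {P : Set (Set Str)} {ψ : Str → Set Str} (G : FGood P ψ)
include G

lemma perf (s : Str) : IsPerfectTree (ψ s) := G.ptf.2.1 _ (G.mem s)

lemma stem_mem (s : Str) : stem (ψ s) ∈ ψ s := (pt_isStem_stem (G.perf s)).1

lemma mono1 {s : Str} {i : Bool} : ψ (s ++ [i]) ⊆ ψ s := fun _ ht => (G.split s i ht).1

lemma mono {s s' : Str} (h : s <+: s') : ψ s' ⊆ ψ s := by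
  obtain ⟨r, rfl⟩ := h
  induction r using List.reverseRecOn with
  | nil => rw [List.append_nil]
  | append_singleton r i ih =>
    rw [← List.append_assoc]
    exact fun t ht => ih (G.mono1 ht)

lemma comp {s t : Str} (ht : t ∈ ψ s) : t <+: stem (ψ s) ∨ stem (ψ s) <+: t :=
  pt_mem_comp_stem (G.perf s) ht

lemma split' {s : Str} {i : Bool} {t : Str} (ht : t ∈ ψ (s ++ [i])) :
    stem (ψ s) ++ [i] <+: t ∨ t <+: stem (ψ s) ++ [i] := (G.split s i ht).2

lemma stem_ext (s : Str) (i : Bool) :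
    stem (ψ s) ++ [i] <+: stem (ψ (s ++ [i])) := by
  obtain ⟨t, ht, hlen⟩ := pt_exists_long (G.perf (s ++ [i]))
    ((stem (ψ s) ++ [i]).length + 1)
  have hut : stem (ψ s) ++ [i] <+: t := by
    rcases G.split' ht with h | h
    · exact h
    · exact absurd hlen (by have := h.length_le; omega)
  have humem : stem (ψ s) ++ [i] ∈ ψ (s ++ [i]) := (G.perf (s ++ [i])).2.1 hut ht
  have hres : ψ (s ++ [i]) = Tres (ψ (s ++ [i])) (stem (ψ s) ++ [i]) :=
    pt_tres_eq_self (fun t ht => G.split' ht)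
  exact (pt_isStem_stem (G.perf (s ++ [i]))).2.2 _ humem hres

lemma stem_mono {s s' : Str} (h : s <+: s') : stem (ψ s) <+: stem (ψ s') := by
  obtain ⟨r, rfl⟩ := h
  induction r using List.reverseRecOn with
  | nil => rw [List.append_nil]
  | append_singleton r i ih =>
    rw [← List.append_assoc]
    exact ih.trans ((List.prefix_append _ _).trans (G.stem_ext (s ++ r) i))

lemma key {s s' t : Str} {b : Bool} (hlen : s'.length = s.length + 1)
    (ht : t ∈ ψ s') (hext : stem (ψ s) ++ [b] <+: t) : s' = s ++ [b] := by
  by_contra hne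
  have hninc : ¬ s' <+: (s ++ [b]) := fun hh => hne (hh.eq_of_length (by simp [hlen]))
  have hninc' : ¬ (s ++ [b]) <+: s' := fun hh =>
    hne (hh.eq_of_length (by simp [hlen])).symm
  obtain ⟨r, i, j, hij, hi, hj⟩ := pt_meet (s ++ [b]) s' hninc' hninc
  have hri : stem (ψ r) ++ [i] <+: t := by
    rcases Nat.lt_or_ge r.length s.length with hl | hl
    · have hrs : r ++ [i] <+: s :=
        List.prefix_of_prefix_length_le hi (List.prefix_append s [b]) (by simp; omega)
      exact ((G.stem_ext r i).trans
        ((G.stem_mono hrs).trans ((List.prefix_append _ _).trans hext)))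
    · have hlr : r.length = s.length := by
        have := hi.length_le; simp at this; omega
      obtain ⟨rfl, rfl⟩ := pt_bits_eq hi (List.prefix_refl (s ++ [b])) hlr
      exact hext
  have hj' : stem (ψ r) ++ [j] <+: t ∨ t <+: stem (ψ r) ++ [j] :=
    G.split' (G.mono hj ht)
  rcases hj' with h | h
  · exact pt_bit_ne hij hri h
  · have hlen' : (stem (ψ r) ++ [j]).length ≤ t.length := by
      have := hri.length_le; simp at this ⊢; omega
    have heq : t = stem (ψ r) ++ [j] := h.eq_of_length (le_antisymm h.length_le hlen')
    exact pt_bit_ne hij hri (by rw [heq])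

lemma Tup_sub (u : Str) : Tup ψ u ⊆ TTp ψ ∩ ψ u := by
  rintro t ⟨s, hus, hts⟩
  have hsmem : t ∈ ψ s := (G.perf s).2.1 hts (G.stem_mem s)
  refine ⟨pt_mem_TTp.mpr ?_, G.mono hus hsmem⟩
  intro n
  rcases le_or_gt n s.length with h | h
  · exact ⟨s.take n, by simp [h], G.mono (List.take_prefix _ _) hsmem⟩
  · refine ⟨s ++ List.replicate (n - s.length) false, by simp; omega, ?_⟩
    have hst : stem (ψ s) <+: stem (ψ (s ++ List.replicate (n - s.length) false)) :=
      G.stem_mono (List.prefix_append _ _)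
    exact (G.perf _).2.1 (hts.trans hst) (G.stem_mem _)

lemma toTup : ∀ (k : ℕ) (u t : Str), t ∈ TTp ψ → t ∈ ψ u →
    t.length ≤ (stem (ψ u)).length + k → t ∈ Tup ψ u := by
  intro k
  induction k with
  | zero =>
    intro u t _ htu hlen
    rcases G.comp htu with h | h
    · exact ⟨u, List.prefix_refl u, h⟩
    · have : stem (ψ u) = t := h.eq_of_length (le_antisymm h.length_le (by omega))
      exact ⟨u, List.prefix_refl u, by rw [← this]⟩
  | succ k ih =>
    intro u t htT htu hlen
    rcases G.comp htu with h | h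
    · exact ⟨u, List.prefix_refl u, h⟩
    rcases le_or_gt t.length (stem (ψ u)).length with hl | hl
    · have : stem (ψ u) = t := h.eq_of_length (le_antisymm h.length_le hl)
      exact ⟨u, List.prefix_refl u, by rw [← this]⟩
    obtain ⟨b, hb⟩ := pt_exists_bit h hl
    obtain ⟨s₁, hs₁l, hs₁m⟩ := pt_mem_TTp.mp htT (u.length + 1)
    have hkey := G.key hs₁l hs₁m hb
    have hm : t ∈ ψ (u ++ [b]) := hkey ▸ hs₁m
    have hstep := (G.stem_ext u b).length_le
    obtain ⟨s, hus, hts⟩ := ih (u ++ [b]) t htT hm (by simp at hstep; omega)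
    exact ⟨s, (List.prefix_append u [b]).trans hus, hts⟩

lemma TT_inter (u : Str) : TTp ψ ∩ ψ u = Tup ψ u := by
  apply Set.Subset.antisymm
  · rintro t ⟨htT, htu⟩
    exact G.toTup t.length u t htT htu (by omega)
  · exact G.Tup_sub u

lemma TT_eq : TTp ψ = Tup ψ [] := by
  rw [← G.TT_inter []]
  exact (Set.inter_eq_self_of_subset_left pt_TTp_subset_nil).symm

lemma isStem_Tup (u : Str) : IsStem (Tup ψ u) (stem (ψ u)) := by
  refine ⟨⟨u, List.prefix_refl u, List.prefix_refl _⟩, ?_, ?_⟩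
  · apply pt_tres_eq_self
    rintro t ⟨s, hus, hts⟩
    exact pt_comp_of_prefix_prefix (G.stem_mono hus) hts
  · intro t htmem hres
    have hcomp : ∀ z ∈ Tup ψ u, z <+: t ∨ t <+: z := by
      intro z hz
      exact ((hres ▸ hz).2).symm
    have key2 : ∀ i : Bool, t <+: stem (ψ (u ++ [i])) := by
      intro i
      rcases hcomp _ ⟨u ++ [i], List.prefix_append _ _, List.prefix_refl _⟩ with h | h
      · exfalso
        have hxi : stem (ψ u) ++ [i] <+: t := (G.stem_ext u i).trans h
        have hne : i ≠ !i := by cases i <;> simp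
        rcases hcomp _ ⟨u ++ [!i], List.prefix_append _ _, List.prefix_refl _⟩ with h' | h'
        · exact pt_bit_ne hne hxi ((G.stem_ext u (!i)).trans h')
        · have hlen : (stem (ψ u) ++ [!i]).length ≤ t.length := by
            have := hxi.length_le; simp at this ⊢; omega
          exact pt_bit_ne hne hxi
            (List.prefix_of_prefix_length_le (G.stem_ext u (!i)) h' hlen)
      · exact h
    rcases le_or_gt t.length (stem (ψ u)).length with hl | hl
    · exact List.prefix_of_prefix_length_le (key2 false)
        ((List.prefix_append _ _).trans (G.stem_ext u false)) hl
    · exfalso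
      have a0 : stem (ψ u) ++ [false] <+: t :=
        List.prefix_of_prefix_length_le (G.stem_ext u false) (key2 false) (by simp; omega)
      have a1 : stem (ψ u) ++ [true] <+: t :=
        List.prefix_of_prefix_length_le (G.stem_ext u true) (key2 true) (by simp; omega)
      exact pt_bit_ne (by simp) a0 a1

lemma tres_Tup (u : Str) (b : Bool) :
    Tres (Tup ψ u) (stem (ψ u) ++ [b]) = Tup ψ (u ++ [b]) := by
  apply Set.Subset.antisymm
  · rintro t ⟨⟨s, hus, hts⟩, hcomp⟩
    rcases hcomp with h | h
    · rcases Nat.lt_or_ge u.length s.length with hl | hl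
      · obtain ⟨j, hj⟩ := pt_exists_bit hus hl
        have hbj : stem (ψ u) ++ [j] <+: stem (ψ s) :=
          (G.stem_ext u j).trans (G.stem_mono hj)
        have hbs : stem (ψ u) ++ [b] <+: stem (ψ s) := h.trans hts
        obtain ⟨-, hbj'⟩ := pt_bits_eq hbs hbj rfl
        exact ⟨s, hbj' ▸ hj, hts⟩
      · exfalso
        have hue : u = s := hus.eq_of_length (le_antisymm hus.length_le hl)
        have hts' : t <+: stem (ψ u) := hue ▸ hts
        have := (h.trans hts').length_le
        simp at this
    · exact ⟨u ++ [b], List.prefix_refl _, h.trans (G.stem_ext u b)⟩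
  · rintro t ⟨s, hus, hts⟩
    have h1 : stem (ψ u) ++ [b] <+: stem (ψ s) := (G.stem_ext u b).trans (G.stem_mono hus)
    exact ⟨⟨s, (List.prefix_append _ _).trans hus, hts⟩, pt_comp_of_prefix_prefix h1 hts⟩

lemma splitIter_TT (u : Str) : splitIter (TTp ψ) u = Tup ψ u := by
  induction u using List.reverseRecOn with
  | nil => exact G.TT_eq
  | append_singleton u b ih =>
    rw [pt_splitIter_concat, ih]
    show Tres (Tup ψ u) (stem (Tup ψ u) ++ [b]) = _
    rw [pt_stem_eq (G.isStem_Tup u), G.tres_Tup]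

lemma perfect_TT : IsPerfectTree (TTp ψ) := by
  rw [G.TT_eq]
  refine ⟨⟨stem (ψ []), [], List.prefix_refl _, List.prefix_refl _⟩, ?_, ?_⟩
  · rintro x y hxy ⟨s, hs, hys⟩
    exact ⟨s, hs, hxy.trans hys⟩
  · rintro t ⟨s, hs, hts⟩
    refine ⟨stem (ψ (s ++ [false])), stem (ψ (s ++ [true])),
      ⟨s ++ [false], List.nil_prefix, List.prefix_refl _⟩,
      ⟨s ++ [true], List.nil_prefix, List.prefix_refl _⟩,
      hts.trans ((List.prefix_append _ _).trans (G.stem_ext s false)),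
      hts.trans ((List.prefix_append _ _).trans (G.stem_ext s true)), ?_, ?_⟩
    · intro hcon
      exact pt_bit_ne (by simp : (false : Bool) ≠ true)
        ((G.stem_ext s false).trans hcon) (G.stem_ext s true)
    · intro hcon
      exact pt_bit_ne (by simp : (false : Bool) ≠ true)
        (G.stem_ext s false) ((G.stem_ext s true).trans hcon)

lemma branch_level {a : Pt} (ha : a ∈ branches (TTp ψ)) :
    ∀ n, ∃ s, s.length = n ∧ ∀ k, seg a k ∈ ψ s := by
  intro n
  induction n with
  | zero => exact ⟨[], rfl, fun k => pt_TTp_subset_nil (ha k)⟩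
  | succ n ih =>
    obtain ⟨s, hsl, hmem⟩ := ih
    have halong : seg a (stem (ψ s)).length = stem (ψ s) := by
      rcases G.comp (hmem (stem (ψ s)).length) with h | h
      · exact h.eq_of_length (pt_seg_length _ _)
      · exact ((h.eq_of_length (pt_seg_length _ _).symm).symm)
    have hseg : seg a ((stem (ψ s)).length + 1) = stem (ψ s) ++ [a (stem (ψ s)).length] := by
      rw [pt_seg_succ, halong]
    have hmain : ∀ k, (stem (ψ s)).length + 1 ≤ k →
        seg a k ∈ ψ (s ++ [a (stem (ψ s)).length]) := by
      intro k hk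
      obtain ⟨s₁, hs₁l, hs₁m⟩ := pt_mem_TTp.mp (ha k) (s.length + 1)
      have hpre : stem (ψ s) ++ [a (stem (ψ s)).length] <+: seg a k := by
        rw [← hseg]; exact pt_seg_prefix a hk
      have hkey := G.key (by rw [hs₁l, hsl]) hs₁m hpre
      exact hkey ▸ hs₁m
    refine ⟨s ++ [a (stem (ψ s)).length], by simp [hsl], ?_⟩
    intro k
    rcases le_or_gt ((stem (ψ s)).length + 1) k with hk | hk
    · exact hmain k hk
    · exact (G.perf _).2.1 (pt_seg_prefix a (by omega)) (hmain _ le_rfl)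

lemma branches_TT :
    branches (TTp ψ) = ⋂ n : ℕ, ⋃ (s : Str) (_ : s.length = n), branches (ψ s) := by
  apply Set.Subset.antisymm
  · intro a ha
    rw [Set.mem_iInter]
    intro n
    obtain ⟨s, hsl, hmem⟩ := G.branch_level ha n
    exact Set.mem_iUnion.mpr ⟨s, Set.mem_iUnion.mpr ⟨hsl, hmem⟩⟩
  · intro a ha
    intro k
    rw [pt_mem_TTp]
    intro n
    have h := Set.mem_iInter.mp ha n
    simp only [Set.mem_iUnion] at h
    obtain ⟨s, hsl, hb⟩ := h
    exact ⟨s, hsl, hb k⟩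

lemma TT_inter_eq (u : Str) :
    TTp ψ ∩ ψ u = ⋂ (n : ℕ) (_ : u.length ≤ n),
      ⋃ (s : Str) (_ : s.length = n ∧ u <+: s), ψ s := by
  apply Set.Subset.antisymm
  · intro t ht
    obtain ⟨s₀, hus, hts⟩ := (G.TT_inter u) ▸ ht
    have htmem : t ∈ ψ s₀ := (G.perf s₀).2.1 hts (G.stem_mem s₀)
    simp only [Set.mem_iInter, Set.mem_iUnion]
    intro n hn
    rcases le_or_gt n s₀.length with h | h
    · exact ⟨s₀.take n, ⟨by simp [h], List.prefix_take_iff.mpr ⟨hus, hn⟩⟩,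
        G.mono (List.take_prefix _ _) htmem⟩
    · refine ⟨s₀ ++ List.replicate (n - s₀.length) false,
        ⟨by simp; omega, hus.trans (List.prefix_append _ _)⟩, ?_⟩
      exact (G.perf _).2.1 (hts.trans (G.stem_mono (List.prefix_append _ _)))
        (G.stem_mem _)
  · intro t ht
    simp only [Set.mem_iInter, Set.mem_iUnion] at ht
    have htu : t ∈ ψ u := by
      obtain ⟨s, ⟨hl, hus⟩, hmem⟩ := ht u.length le_rfl
      have : u = s := hus.eq_of_length hl.symm
      rwa [← this] at hmem
    have htT : t ∈ TTp ψ := by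
      rw [pt_mem_TTp]
      intro n
      rcases le_or_gt u.length n with h | h
      · obtain ⟨s, ⟨hl, _⟩, hmem⟩ := ht n h
        exact ⟨s, hl, hmem⟩
      · exact ⟨u.take n, by simp [Nat.le_of_lt h], G.mono (List.take_prefix _ _) htu⟩
    exact ⟨htT, htu⟩

end FGood

/-- Lemma 2.11 (infty): existence of strictly increasing sequences of finite
splitting systems over `P`, and the properties of the limit system and of
the fusion tree `T = ⋂ₙ ⋃_{|s|=n} T_s`. -/
theorem stmt11 (P : Set (Set Str)) (hP : IsPTF P) :
    (∃ (phi : ℕ → Str → Set Str) (h : ℕ → ℕ),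
      ∀ n : ℕ, IsFSS P (h n) (phi n) ∧ h n < h (n + 1) ∧
        ∀ s : Str, s.length ≤ h n → phi (n + 1) s = phi n s) ∧
    (∀ (phi : ℕ → Str → Set Str) (h : ℕ → ℕ),
      (∀ n : ℕ, IsFSS P (h n) (phi n) ∧ h n < h (n + 1) ∧
        ∀ s : Str, s.length ≤ h n → phi (n + 1) s = phi n s) →
      ∀ psi : Str → Set Str,
        (∀ (n : ℕ) (s : Str), s.length ≤ h n → psi s = phi n s) →
        (∀ s : Str, psi s ∈ P) ∧
        (∀ (s : Str) (i : Bool), psi (s ++ [i]) ⊆ splitOne (psi s) i) ∧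
        IsPerfectTree (⋂ n : ℕ, ⋃ (s : Str) (_ : s.length = n), psi s) ∧
        branches (⋂ n : ℕ, ⋃ (s : Str) (_ : s.length = n), psi s)
          = (⋂ n : ℕ, ⋃ (s : Str) (_ : s.length = n), branches (psi s)) ∧
        ∀ u : Str,
          splitIter (⋂ n : ℕ, ⋃ (s : Str) (_ : s.length = n), psi s) u
            = (⋂ n : ℕ, ⋃ (s : Str) (_ : s.length = n), psi s) ∩ psi u ∧
          (⋂ n : ℕ, ⋃ (s : Str) (_ : s.length = n), psi s) ∩ psi u
            = ⋂ (n : ℕ) (_ : u.length ≤ n),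
                ⋃ (s : Str) (_ : s.length = n ∧ u <+: s), psi s) := by
  constructor
  · -- part (a)
    obtain ⟨T₀, hT₀⟩ := hP.1
    refine ⟨fun _ s => splitIter T₀ s, fun n => n, ?_⟩
    intro n
    refine ⟨⟨fun s _ => pt_splitIter_mem hP hT₀ s, fun s i _ => ?_⟩,
      Nat.lt_succ_self n, fun s _ => rfl⟩
    show splitIter T₀ (s ++ [i]) ⊆ splitOne (splitIter T₀ s) i
    rw [pt_splitIter_concat]
  · -- part (b)
    intro phi h hyp psi hpsi
    have hmono : StrictMono h := strictMono_nat_of_lt_succ (fun n => (hyp n).2.1)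
    have h1 : ∀ s, psi s ∈ P := by
      intro s
      rw [hpsi s.length s hmono.le_apply]
      exact ((hyp s.length).1).1 s hmono.le_apply
    have h2 : ∀ s i, psi (s ++ [i]) ⊆ splitOne (psi s) i := by
      intro s i
      have hle : s.length + 1 ≤ h (s.length + 1) := hmono.le_apply
      rw [hpsi (s.length + 1) (s ++ [i]) (by simp; omega),
        hpsi (s.length + 1) s (by omega)]
      exact ((hyp (s.length + 1)).1).2 s i (by omega)
    have G : FGood P psi := ⟨hP, h1, h2⟩
    have hTT : (⋂ n : ℕ, ⋃ (s : Str) (_ : s.length = n), psi s) = TTp psi := rfl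
    refine ⟨h1, h2, ?_, ?_, ?_⟩
    · rw [hTT]; exact G.perfect_TT
    · rw [hTT]; exact G.branches_TT
    · intro u
      rw [hTT]
      exact ⟨(G.splitIter_TT u).trans (G.TT_inter u).symm, G.TT_inter_eq u⟩

end
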